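/- Let A = ℚ[π] be a group algebra with Fox pairing η, and define the derived form σ_η : A × A → A on group elements x, y ∈ π by σ_η(x, y) = y·x^{−1}·η(x, y) using the group-like coproduct (this is the specialization of the Hopf-algebraic formula σ_η(a,b) = ∑ b′ S(η(a″,b″)′) a′ η(a″,b″)″ to group-likes, where Δ(x) = x⊗x). Then for each fixed x ∈ π, the linear extension σ_η(x, −) : A → A is a derivation of A: σ_η(x, yz) = σ_η(x,y)·z + y·σ_η(x,z) for all y, z ∈ π. -/

import Mathlib

/-- The augmentation homomorphism of the rational group algebra. -/
noncomputable def aug (G : Type*) [Group G] : MonoidAlgebra ℚ G →ₐ[ℚ] ℚ :=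
  MonoidAlgebra.lift ℚ ℚ G 1

/-- The derived form of a Fox pairing on group elements: writing
`η(x,y) = ∑_g c_g·g`, one sets `σ_η(x,y) = ∑_g c_g · (y·g⁻¹·x·g)`; this is the
specialization `∑ b′·S(η(a″,b″)′)·a′·η(a″,b″)″` of the Hopf-algebraic formula to
group-like elements `Δ(x) = x ⊗ x`. -/
noncomputable def sigmaEta (G : Type*) [Group G]
    (η : MonoidAlgebra ℚ G →ₗ[ℚ] MonoidAlgebra ℚ G →ₗ[ℚ] MonoidAlgebra ℚ G)
    (x y : G) : MonoidAlgebra ℚ G :=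
  Finsupp.sum (η (MonoidAlgebra.of ℚ G x) (MonoidAlgebra.of ℚ G y)).coeff
    fun g c => c • MonoidAlgebra.of ℚ G (y * g⁻¹ * x * g)

lemma aug_of (G : Type*) [Group G] (y : G) : aug G (MonoidAlgebra.of ℚ G y) = 1 := by
  simp [aug]

lemma sum_mul_single (G : Type*) [Group G] (x y z : G) (p : MonoidAlgebra ℚ G) :
    Finsupp.sum (p * MonoidAlgebra.of ℚ G z).coeff
      (fun g c => c • MonoidAlgebra.of ℚ G (y * z * g⁻¹ * x * g))
    = (Finsupp.sum p.coeff fun g c => c • MonoidAlgebra.of ℚ G (y * g⁻¹ * x * g))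
        * MonoidAlgebra.of ℚ G z := by
  induction p using MonoidAlgebra.induction with
  | zero => simp
  | single_add a b p ha hb ih =>
    rw [add_mul, MonoidAlgebra.coeff_add, Finsupp.sum_add_index' (by simp) (by intros; rw [add_smul]),
      MonoidAlgebra.coeff_add, Finsupp.sum_add_index' (by simp) (by intros; rw [add_smul]), add_mul, ih]
    congr 1
    have : (MonoidAlgebra.single a b : MonoidAlgebra ℚ G) * MonoidAlgebra.of ℚ G z
        = MonoidAlgebra.single (a * z) b := by
      rw [MonoidAlgebra.of_apply, MonoidAlgebra.single_mul_single, mul_one]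
    show Finsupp.sum ((MonoidAlgebra.single a b : MonoidAlgebra ℚ G) * MonoidAlgebra.of ℚ G z).coeff _ = _
    rw [this, MonoidAlgebra.coeff_single, Finsupp.sum_single_index (by simp), MonoidAlgebra.coeff_single, Finsupp.sum_single_index (by simp),
      smul_mul_assoc]
    congr 2
    rw [MonoidAlgebra.of_apply, MonoidAlgebra.of_apply, MonoidAlgebra.of_apply,
      MonoidAlgebra.single_mul_single, one_mul]
    congr 1
    group

/-- For a Fox pairing `η` on `ℚ[π]` and any fixed `x ∈ π`, the derived form
`σ_η(x, −)` (extended linearly) is a derivation of `ℚ[π]`: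
`σ_η(x, yz) = σ_η(x,y)·z + y·σ_η(x,z)` for all `y, z ∈ π`. -/
theorem sigmaEta_derivation (G : Type*) [Group G]
    (η : MonoidAlgebra ℚ G →ₗ[ℚ] MonoidAlgebra ℚ G →ₗ[ℚ] MonoidAlgebra ℚ G)
    (hfox1 : ∀ a b c : MonoidAlgebra ℚ G,
      η (a * b) c = a * η b c + aug G b • η a c)
    (hfox2 : ∀ a b c : MonoidAlgebra ℚ G,
      η a (b * c) = η a b * c + aug G b • η a c)
    (x y z : G) :
    sigmaEta G η x (y * z)
      = sigmaEta G η x y * MonoidAlgebra.of ℚ G z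
        + MonoidAlgebra.of ℚ G y * sigmaEta G η x z := by
  unfold sigmaEta
  have hmul : MonoidAlgebra.of ℚ G (y * z)
      = MonoidAlgebra.of ℚ G y * MonoidAlgebra.of ℚ G z := map_mul _ _ _
  rw [hmul, hfox2, aug_of, one_smul, MonoidAlgebra.coeff_add,
    Finsupp.sum_add_index' (by simp) (by intros; rw [add_smul])]
  congr 1
  · rw [sum_mul_single]
  · rw [Finsupp.mul_sum]
    apply Finsupp.sum_congr
    intro g _
    rw [mul_smul_comm, ← map_mul]
    congr 2
    group
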